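/- Let A ∈ ℝ^{N×N} be symmetric with entries in {0,1}, regular of degree k > 0 (Σ_{i} A_{ij} = k for all j), and let α ∈ ℝ. Define F : ℝ^N → ℝ^N by F(p)_i = Σ_{j=1}^N [A_{ij} exp(αN p_i) / (Σ_{l=1}^N A_{lj} exp(αN p_l))] p_j. Then F is differentiable at the uniform state p_unif = (1/N, …, 1/N), and its Jacobian (Fréchet derivative) at p_unif is the linear map given by the matrix DF(p_unif) = A/k − α A²/k² + α I, where I is the N×N identity matrix. -/

import Mathlib

open Finset Matrix

/-- For a nonlinear random walk with exponential bias
`f(p) = exp(αNp)` on an undirected (symmetric), unweighted, `k`-regular network,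
the map `F` is differentiable at the uniform state `p_unif = (1/N, …, 1/N)` and
its Jacobian there is the matrix `A/k − α A²/k² + α I`. -/
theorem jacobian_at_uniform_state
    (N : ℕ) (hN : 0 < N) (A : Matrix (Fin N) (Fin N) ℝ)
    (hsym : Aᵀ = A) (hA01 : ∀ i j, A i j = 0 ∨ A i j = 1)
    (k : ℝ) (hk : 0 < k) (hreg : ∀ j, ∑ i, A i j = k)
    (α : ℝ)
    (F : (Fin N → ℝ) → (Fin N → ℝ))
    (hF : ∀ p i, F p i =
      ∑ j, (A i j * Real.exp (α * N * p i) /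
        ∑ l, A l j * Real.exp (α * N * p l)) * p j)
    (punif : Fin N → ℝ) (hp : ∀ i, punif i = 1 / N)
    (M : Matrix (Fin N) (Fin N) ℝ)
    (hM : M = k⁻¹ • A - (α / k ^ 2) • (A * A) + α • (1 : Matrix (Fin N) (Fin N) ℝ)) :
    HasFDerivAt F (LinearMap.toContinuousLinearMap M.mulVecLin) punif := by
  have hNr : (N:ℝ) ≠ 0 := Nat.cast_ne_zero.mpr hN.ne'
  have he : Real.exp α ≠ 0 := (Real.exp_pos α).ne'
  have hkne : k ≠ 0 := hk.ne'
  have hFeq : F = fun p i => ∑ j, (A i j * Real.exp (α * N * p i) /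
        ∑ l, A l j * Real.exp (α * N * p l)) * p j := by
    funext p i; exact hF p i
  subst hFeq hM
  have hcp : ∀ l : Fin N, α * (N:ℝ) * punif l = α := by
    intro l; rw [hp]; field_simp
  have hrow : ∀ i, ∑ j, A i j = k := by
    intro i; rw [← hreg i]
    exact Finset.sum_congr rfl fun j _ => by nth_rewrite 1 [← hsym]; rw [Matrix.transpose_apply]
  have hexp : ∀ l : Fin N, HasFDerivAt (fun p : Fin N → ℝ => Real.exp (α * N * p l))
      ((Real.exp α * (α * N)) • (ContinuousLinearMap.proj l : (Fin N → ℝ) →L[ℝ] ℝ)) punif := by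
    intro l
    have h1 : HasFDerivAt (fun p : Fin N → ℝ => α * N * p l)
        ((α * (N:ℝ)) • (ContinuousLinearMap.proj l : (Fin N → ℝ) →L[ℝ] ℝ)) punif :=
      (hasFDerivAt_apply l punif).const_mul (α * N)
    have h2 := (Real.hasDerivAt_exp (α * N * punif l)).comp_hasFDerivAt punif h1
    rw [hcp l, smul_smul] at h2
    exact h2
  have hden : ∀ j, HasFDerivAt (fun p : Fin N → ℝ => ∑ l, A l j * Real.exp (α * N * p l))
      (∑ l, A l j • ((Real.exp α * (α * N)) • (ContinuousLinearMap.proj l : (Fin N → ℝ) →L[ℝ] ℝ))) punif :=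
    fun j => HasFDerivAt.fun_sum fun l _ => (hexp l).const_mul (A l j)
  have hval : ∀ j, (∑ l, A l j * Real.exp (α * N * punif l)) = k * Real.exp α := by
    intro j
    simp only [hcp]
    rw [← Finset.sum_mul, hreg]
  have hne : ∀ j, (∑ l, A l j * Real.exp (α * N * punif l)) ≠ 0 := by
    intro j; rw [hval]; exact mul_ne_zero hkne he
  have hnum : ∀ i j, HasFDerivAt (fun p : Fin N → ℝ => A i j * Real.exp (α * N * p i))
      (A i j • ((Real.exp α * (α * N)) • (ContinuousLinearMap.proj i : (Fin N → ℝ) →L[ℝ] ℝ))) punif :=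
    fun i j => (hexp i).const_mul (A i j)
  have hinv := fun j => (hasFDerivAt_inv' (𝕜 := ℝ) (hne j)).comp punif (hden j)
  rw [hasFDerivAt_pi']
  intro i
  have hterm := fun j => ((hnum i j).mul (hinv j)).mul (hasFDerivAt_apply j punif)
  have hFi := HasFDerivAt.fun_sum (u := Finset.univ) fun j _ => hterm j
  simp only [div_eq_mul_inv]
  refine HasFDerivAt.congr_fderiv hFi ?_
  ext v
  have hα : α * (N:ℝ) * ((N:ℝ))⁻¹ = α := by field_simp
  have hval2 : ∀ j : Fin N, (∑ l, A l j * Real.exp α) = k * Real.exp α := by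
    intro j; rw [← Finset.sum_mul, hreg]
  have hpull : ∀ j : Fin N, (∑ l, A l j * (Real.exp α * (α * (N:ℝ)) * v l))
      = Real.exp α * (α * (N:ℝ)) * ∑ l, A l j * v l := by
    intro j; rw [Finset.mul_sum]; exact Finset.sum_congr rfl fun l _ => by ring
  simp only [ContinuousLinearMap.coe_comp', Function.comp_apply, ContinuousLinearMap.coe_sum',
    Finset.sum_apply, ContinuousLinearMap.add_apply, ContinuousLinearMap.coe_smul',
    Pi.smul_apply, ContinuousLinearMap.proj_apply, smul_eq_mul, ContinuousLinearMap.neg_apply,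
    ContinuousLinearMap.mulLeftRight_apply, LinearMap.coe_toContinuousLinearMap',
    Matrix.mulVecLin_apply, hcp, hp, hα, hval2, hpull, ContinuousLinearMap.smul_apply,
    ContinuousLinearMap.sum_apply, ContinuousLinearMap.comp_apply, one_div, Pi.mul_apply]
  have hsymm' : ∀ a b : Fin N, A a b = A b a := by
    intro a b; nth_rewrite 1 [← hsym]; rw [Matrix.transpose_apply]
  have hswap : ∑ j, A i j * ∑ l, A l j * v l = ∑ j, (∑ l, A i l * A l j) * v j := by
    calc ∑ j, A i j * ∑ l, A l j * v l
        = ∑ j, ∑ l, A i j * A l j * v l := by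
          refine Finset.sum_congr rfl fun j _ => ?_
          rw [Finset.mul_sum]; exact Finset.sum_congr rfl fun l _ => by ring
      _ = ∑ l, ∑ j, A i j * A l j * v l := Finset.sum_comm
      _ = ∑ l, (∑ j, A i j * A j l) * v l := by
          refine Finset.sum_congr rfl fun l _ => ?_
          rw [Finset.sum_mul]
          exact Finset.sum_congr rfl fun j _ => by rw [hsymm' l j]
      _ = ∑ j, (∑ l, A i l * A l j) * v j := rfl
  have hvi : ∑ j, A i j * v i = k * v i := by rw [← Finset.sum_mul, hrow]
  have hR : ((k⁻¹ • A - (α * (k ^ 2)⁻¹) • (A * A) + α • 1) *ᵥ v) i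
      = k⁻¹ * (∑ j, A i j * v j) - α * (k ^ 2)⁻¹ * ∑ j, (∑ l, A i l * A l j) * v j + α * v i := by
    simp [Matrix.add_mulVec, Matrix.sub_mulVec, Matrix.smul_mulVec, Matrix.one_mulVec,
      Matrix.mulVec, dotProduct, Matrix.mul_apply, Finset.mul_sum, Matrix.one_apply,
      sub_mul, add_mul, Finset.sum_sub_distrib, Finset.sum_add_distrib, ite_mul, one_mul,
      zero_mul, mul_ite, mul_zero, mul_one, Finset.sum_ite_eq, Finset.sum_mul, mul_assoc]
  rw [hR]
  trans ∑ j, (k⁻¹ * (A i j * v j) + α / k * (A i j * v i) - α * (k ^ 2)⁻¹ * (A i j * ∑ l, A l j * v l))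
  · refine Finset.sum_congr rfl fun j _ => ?_
    field_simp
    ring
  · rw [Finset.sum_sub_distrib, Finset.sum_add_distrib, ← Finset.mul_sum, ← Finset.mul_sum,
      ← Finset.mul_sum, hvi, hswap]
    field_simp
    ring
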